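/- For any function f : ℝⁿ → [0,∞), any α ∈ (0,1), and constants K > 1 and C₀ > 0, if the Hölder seminorm satisfies [f]_{C^α} ≤ K and ∫_{ℝⁿ} f |log f| ≤ C₀, then ‖f‖_{L^∞} ≤ C(n, α, C₀) · K^{n/(n+α)} (log K)^{-α/(n+α)} for some constant C depending only on n, α, C₀. -/

import Mathlib

set_option maxHeartbeats 1000000


open MeasureTheory

/-- If `f ≥ 0` has Hölder seminorm `[f]_{C^α} ≤ K` (with `K > 1`) and
`∫ f|log f| ≤ C₀`, then `‖f‖_∞ ≤ C(n,α,C₀) K^{n/(n+α)} (log K)^{-α/(n+α)}`. -/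
theorem stmt1 (n : ℕ) (hn : 0 < n) (α C₀ : ℝ)
    (hα : α ∈ Set.Ioo (0:ℝ) 1) (hC₀ : 0 < C₀) :
    ∃ C : ℝ, 0 < C ∧
      ∀ (f : EuclideanSpace ℝ (Fin n) → ℝ) (K : ℝ),
        (∀ x, 0 ≤ f x) → 1 < K →
        (∀ x y, |f x - f y| ≤ K * ‖x - y‖ ^ α) →
        Integrable (fun x => f x * |Real.log (f x)|) →
        (∫ x, f x * |Real.log (f x)|) ≤ C₀ →
        ∀ x, f x ≤ C * K ^ ((n : ℝ) / ((n : ℝ) + α)) *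
          Real.log K ^ (-(α / ((n : ℝ) + α))) := by
  obtain ⟨hα0, hα1⟩ := hα
  have hn1 : (1:ℝ) ≤ (n:ℝ) := by exact_mod_cast hn
  have hnα : (0:ℝ) < (n:ℝ) + α := by linarith
  set β : ℝ := α / ((n:ℝ) + α) with hβdef
  have hβ0 : 0 < β := by positivity
  have h2β : 0 < 1 - 2*β := by
    have : β < 1/2 := by
      rw [hβdef, div_lt_iff₀ hnα]; nlinarith
    linarith
  set ω : ℝ := (volume (Metric.ball (0 : EuclideanSpace ℝ (Fin n)) 1)).toReal with hωdef
  haveI : Nontrivial (EuclideanSpace ℝ (Fin n)) := by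
    have h : 0 < Module.finrank ℝ (EuclideanSpace ℝ (Fin n)) := by
      rw [finrank_euclideanSpace_fin]; exact hn
    exact Module.nontrivial_of_finrank_pos h
  have hωpos : 0 < ω := by
    rw [hωdef]
    exact ENNReal.toReal_pos (Metric.measure_ball_pos _ _ one_pos).ne'
      (measure_ball_lt_top).ne
  set C : ℝ := max (2 * Real.exp 1) (2 * C₀ / (ω * (1 - 2*β)) + 2) with hCdef
  have hC2e : 2 * Real.exp 1 ≤ C := le_max_left _ _
  have hCC₀ : 2 * C₀ / (ω * (1 - 2*β)) + 2 ≤ C := le_max_right _ _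
  have hC2 : (2:ℝ) ≤ C := by
    nlinarith [Real.one_le_exp (zero_le_one)]
  have hCpos : 0 < C := by linarith
  refine ⟨C, hCpos, ?_⟩
  intro f K hf hK hHol hInt hIC₀ x
  by_contra hcon
  push_neg at hcon
  set L : ℝ := Real.log K with hLdef
  have hL : 0 < L := Real.log_pos hK
  have hK0 : (0:ℝ) < K := by linarith
  set M : ℝ := C * K ^ ((n : ℝ) / ((n : ℝ) + α)) * L ^ (-(α / ((n : ℝ) + α))) with hMdef
  have hM0 : 0 < M := by positivity
  -- log of M
  have hlogM : Real.log M = Real.log C + ((n:ℝ)/((n:ℝ)+α)) * L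
      + (-(α/((n:ℝ)+α))) * Real.log L := by
    rw [hMdef, Real.log_mul (by positivity) (by positivity),
      Real.log_mul (by positivity) (by positivity),
      Real.log_rpow hK0, Real.log_rpow hL]
  have hlogL : Real.log L ≤ L - 1 := Real.log_le_sub_one_of_pos hL
  have hlogC : Real.log 2 + 1 ≤ Real.log C := by
    calc Real.log 2 + 1 = Real.log (2 * Real.exp 1) := by
          rw [Real.log_mul two_ne_zero (Real.exp_ne_zero 1), Real.log_exp]
        _ ≤ Real.log C := Real.log_le_log (by positivity) hC2e
  -- lower bound on log (M/2)
  have hlogMdiv : Real.log (M/2) = Real.log M - Real.log 2 :=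
    Real.log_div hM0.ne' two_ne_zero
  have hβeq : (n:ℝ)/((n:ℝ)+α) = 1 - β := by
    rw [hβdef]; field_simp; ring
  have hkey1 : 1 + β + (1 - 2*β) * L ≤ Real.log (M/2) := by
    rw [hlogMdiv, hlogM, hβeq]
    have h1 : -β * (L - 1) ≤ (-(α/((n:ℝ)+α))) * Real.log L := by
      have hb : (-(α/((n:ℝ)+α))) = -β := by rw [hβdef]
      rw [hb]
      nlinarith [hlogL, hβ0]
    nlinarith [hlogC, hL, hβ0]
  have hlogM1 : 1 ≤ Real.log (M/2) := by
    have := mul_nonneg h2β.le hL.le; linarith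
  have hlogM2L : (1 - 2*β) * L ≤ Real.log (M/2) := by linarith
  -- the radius
  set r : ℝ := (M / (2*K)) ^ (1/α : ℝ) with hrdef
  have hM2K : 0 < M / (2*K) := by positivity
  have hr : 0 < r := by positivity
  have hrα : r ^ α = M / (2*K) := by
    rw [hrdef, ← Real.rpow_mul hM2K.le, one_div, inv_mul_cancel₀ hα0.ne', Real.rpow_one]
  -- lower bound of f on the ball
  have hball : ∀ y ∈ Metric.ball x r, M/2 ≤ f y := by
    intro y hy
    have hdist : ‖x - y‖ < r := by
      rw [Metric.mem_ball, dist_eq_norm] at hy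
      rwa [norm_sub_rev]
    have h1 : ‖x - y‖ ^ α ≤ r ^ α :=
      Real.rpow_le_rpow (norm_nonneg _) hdist.le hα0.le
    have h2 : f x - f y ≤ K * (r ^ α) := by
      calc f x - f y ≤ |f x - f y| := le_abs_self _
        _ ≤ K * ‖x - y‖ ^ α := hHol x y
        _ ≤ K * (r ^ α) := by nlinarith
    rw [hrα] at h2
    have h3 : K * (M / (2*K)) = M/2 := by field_simp
    rw [h3] at h2
    linarith [hcon]
  -- pointwise lower bound of the integrand
  have hpt : ∀ y ∈ Metric.ball x r, M/2 * Real.log (M/2) ≤ f y * |Real.log (f y)| := by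
    intro y hy
    have h1 : M/2 ≤ f y := hball y hy
    have h2 : Real.log (M/2) ≤ Real.log (f y) :=
      Real.log_le_log (by positivity) h1
    have h3 : |Real.log (f y)| = Real.log (f y) := abs_of_nonneg (by linarith)
    rw [h3]
    have : (0:ℝ) ≤ Real.log (M/2) := by linarith
    nlinarith [hf y]
  -- volume of the ball
  have hfinrank : Module.finrank ℝ (EuclideanSpace ℝ (Fin n)) = n :=
    finrank_euclideanSpace_fin
  have hvol : (volume (Metric.ball x r)).toReal = r ^ n * ω := by
    rw [Measure.addHaar_ball volume x hr.le, hfinrank, ENNReal.toReal_mul,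
      ENNReal.toReal_ofReal (by positivity), hωdef]
  -- integral lower bound
  have hint1 : M/2 * Real.log (M/2) * (r ^ n * ω)
      ≤ ∫ y in Metric.ball x r, f y * |Real.log (f y)| := by
    rw [← hvol]
    have h := setIntegral_ge_of_const_le Metric.isOpen_ball.measurableSet
      (measure_ball_lt_top).ne hpt hInt.integrableOn
    change (volume (Metric.ball x r)).toReal • (M / 2 * Real.log (M / 2)) ≤ _ at h
    rw [smul_eq_mul] at h
    linarith
  have hint2 : (∫ y in Metric.ball x r, f y * |Real.log (f y)|)
      ≤ ∫ y, f y * |Real.log (f y)| :=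
    setIntegral_le_integral hInt (Filter.Eventually.of_forall fun y => mul_nonneg (hf y) (abs_nonneg _))
  -- the key algebraic identity
  have hrne : r ^ n ≠ 0 := by positivity
  have hMeq : M * r ^ n = C * (C/2) ^ ((n:ℝ)/α) / L := by
    have hP : 0 < M * r ^ n := by positivity
    have hQ : 0 < C * (C/2) ^ ((n:ℝ)/α) / L := by positivity
    rw [← Real.exp_log hP, ← Real.exp_log hQ]
    congr 1
    have hlogr : Real.log r = (1/α) * (Real.log M - (Real.log 2 + L)) := by
      rw [hrdef, Real.log_rpow hM2K, Real.log_div hM0.ne' (by positivity),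
        Real.log_mul two_ne_zero hK0.ne', hLdef]
    have hlogQ : Real.log (C * (C/2) ^ ((n:ℝ)/α) / L)
        = Real.log C + ((n:ℝ)/α) * (Real.log C - Real.log 2) - Real.log L := by
      rw [Real.log_div (by positivity) hL.ne', Real.log_mul hCpos.ne' (by positivity),
        Real.log_rpow (show (0:ℝ) < C/2 by positivity), Real.log_div hCpos.ne' two_ne_zero]
    have hlogP : Real.log (M * r ^ n) = Real.log M + (n:ℝ) * Real.log r := by
      rw [Real.log_mul hM0.ne' hrne, Real.log_pow]
    rw [hlogP, hlogQ, hlogr, hlogM]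
    field_simp
    ring
  -- conclude
  have hfinal : C₀ < M/2 * Real.log (M/2) * (r ^ n * ω) := by
    have h1 : M/2 * Real.log (M/2) * (r ^ n * ω)
        = (ω/2) * (M * r ^ n) * Real.log (M/2) := by ring
    rw [h1, hMeq]
    have hC21 : (1:ℝ) ≤ C/2 := by linarith
    have hpow : (1:ℝ) ≤ (C/2) ^ ((n:ℝ)/α) :=
      Real.one_le_rpow hC21 (by positivity)
    have h2 : (ω/2) * (C * (C/2) ^ ((n:ℝ)/α) / L) * Real.log (M/2)
        ≥ (ω/2) * (C / L) * ((1-2*β) * L) := by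
      have hq : C / L ≤ C * (C/2) ^ ((n:ℝ)/α) / L := by
        gcongr
        nlinarith
      have h0 : (0:ℝ) ≤ (1-2*β) * L := by positivity
      have hlog0 : (0:ℝ) ≤ Real.log (M/2) := by linarith
      have := mul_le_mul hq hlogM2L h0 (by positivity)
      nlinarith [hωpos]
    have h3 : (ω/2) * (C / L) * ((1-2*β) * L) = (ω * (1-2*β) / 2) * C := by
      field_simp
    have h4 : C₀ < (ω * (1-2*β) / 2) * C := by
      have h4' := mul_le_mul_of_nonneg_left hCC₀
        (by positivity : (0:ℝ) ≤ ω * (1-2*β) / 2)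
      have he : (ω * (1-2*β) / 2) * (2 * C₀ / (ω * (1 - 2*β)) + 2) = C₀ + ω * (1-2*β) := by
        field_simp
      rw [he] at h4'
      have hpos2 : 0 < ω * (1-2*β) := mul_pos hωpos h2β
      linarith
    rw [h3] at h2
    linarith
  linarith [hint1, hint2, hIC₀, hfinal]
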